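/- Let 0 ≤ λ < 1 and ω ∈ A_1^+. Let T⁺ be an operator mapping measurable functions on ℝ to measurable functions on ℝ that is sublinear (|T⁺(f+g)(x)| ≤ |T⁺f(x)| + |T⁺g(x)| for a.e. x), satisfies the size condition |T⁺f(x)| ≤ C ∫_x^∞ |f(y)| (y−x)^{−1} dy for a.e. x whenever the right-hand side is finite, and is of weak type (1,1): γ · |{x ∈ ℝ : |T⁺f(x)| > γ}| ≤ C ∫_ℝ |f| for all γ > 0. Then there exists a constant C' such that for every f with ‖f‖_{L^{1,λ}_+(ω)} < ∞, every x0 ∈ ℝ, h > 0 and γ > 0, γ · |{x ∈ (x0, x0+h) : |T⁺f(x)| > γ}| ≤ C' · Φ⁺_{ω,λ,1}(x0,h) · ‖f‖_{L^{1,λ}_+(ω)}; that is, T⁺ is bounded from L^{1,λ}_+(ω) to WL^{1,λ}_+(ω). -/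

import Mathlib

open MeasureTheory
open scoped ENNReal

/-- The one-sided Muckenhoupt class `A_1^+`: `M⁻ω ≤ C·ω` a.e. -/
def MemA1Plus (ω : ℝ → ℝ) : Prop :=
  ∃ C > (0:ℝ), ∀ᵐ x ∂(volume : Measure ℝ), ∀ h > (0:ℝ),
    (∫ y in (x - h)..x, ω y) ≤ C * h * ω x

/-- `Φ⁺_{ω,λ,θ}(x0,h) = h^{λ−1} ∫_{x0−h}^{x0} ω^θ`. -/
noncomputable def Phi (ω : ℝ → ℝ) (lam θ x0 h : ℝ) : ℝ :=
  h ^ (lam - 1) * ∫ y in (x0 - h)..x0, (ω y) ^ θ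

/-- The one-sided weighted Morrey norm
`‖f‖_{L^{p,λ}_+(ω^θ)} = sup_{x0, h>0} (Φ⁺_{ω,λ,θ}(x0,h)⁻¹ ∫_{x0}^{x0+h} |f|^p)^{1/p}`. -/
noncomputable def morreyNorm (ω : ℝ → ℝ) (p lam θ : ℝ) (f : ℝ → ℝ) : ℝ≥0∞ :=
  ⨆ (x0 : ℝ) (h : ℝ) (_ : 0 < h),
    ((∫⁻ y in Set.Ioo x0 (x0 + h), ENNReal.ofReal (|f y| ^ p)) /
      ENNReal.ofReal (Phi ω lam θ x0 h)) ^ (1 / p)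

/-- If a nonnegative function supported in a measurable set `V` has vanishing
(lower) Lebesgue integral on `V`, then the weighted integral against `1/(y-x)`
on `Ioi x` also vanishes. -/
lemma aux_zero_weight (V : Set ℝ) (hV : MeasurableSet V) (e : ℝ → ℝ)
    (he0 : ∀ y, 0 ≤ e y) (heV : ∀ y, y ∉ V → e y = 0)
    (hz : (∫⁻ y in V, ENNReal.ofReal (e y)) = 0) (x : ℝ) :
    (∫⁻ y in Set.Ioi x, ENNReal.ofReal (e y / (y - x))) = 0 := by
  have hcover : Set.Ioi x = ⋃ n : ℕ, Set.Ioi (x + 1 / (n + 1)) := by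
    ext y
    simp only [Set.mem_Ioi, Set.mem_iUnion]
    constructor
    · intro hy
      obtain ⟨n, hn⟩ := exists_nat_one_div_lt (sub_pos.mpr hy)
      exact ⟨n, by linarith⟩
    · rintro ⟨n, hn⟩
      have : (0:ℝ) < 1 / (n + 1) := by positivity
      linarith
  have hbn : ∀ n : ℕ, (∫⁻ y in Set.Ioi (x + 1 / (n + 1 : ℝ)), ENNReal.ofReal (e y / (y - x))) = 0 := by
    intro n
    have hmono : (∫⁻ y in Set.Ioi (x + 1 / (n + 1 : ℝ)), ENNReal.ofReal (e y / (y - x)))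
        ≤ ∫⁻ y in Set.Ioi (x + 1 / (n + 1 : ℝ)), ENNReal.ofReal (n + 1) * ENNReal.ofReal (e y) := by
      apply lintegral_mono_ae
      filter_upwards [ae_restrict_mem measurableSet_Ioi] with y hy
      rw [← ENNReal.ofReal_mul (by positivity)]
      apply ENNReal.ofReal_le_ofReal
      have h1 : (0:ℝ) < 1 / (n + 1) := by positivity
      have h2 : 1 / (n + 1 : ℝ) < y - x := by
        simp only [Set.mem_Ioi] at hy; linarith
      have h3 : (0:ℝ) < y - x := lt_trans h1 h2
      rw [div_le_iff₀ h3]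
      calc e y = 1 * e y := (one_mul _).symm
      _ ≤ ((n + 1) * (y - x)) * e y := by
          apply mul_le_mul_of_nonneg_right _ (he0 y)
          rw [← div_le_iff₀' (by positivity)]
          exact le_of_lt h2
      _ = (n+1) * e y * (y - x) := by ring
    rw [lintegral_const_mul' _ _ ENNReal.ofReal_ne_top] at hmono
    have hind : (∫⁻ y in Set.Ioi (x + 1 / (n + 1 : ℝ)), ENNReal.ofReal (e y)) = 0 := by
      refine le_antisymm ?_ zero_le
      have heq : ∀ y : ℝ, ENNReal.ofReal (e y) = V.indicator (fun y => ENNReal.ofReal (e y)) y := by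
        intro y
        by_cases hy : y ∈ V
        · rw [Set.indicator_of_mem hy]
        · rw [Set.indicator_of_notMem hy, heV y hy]; simp
      calc (∫⁻ y in Set.Ioi (x + 1 / (n + 1 : ℝ)), ENNReal.ofReal (e y))
          = ∫⁻ y in Set.Ioi (x + 1 / (n + 1 : ℝ)), V.indicator (fun y => ENNReal.ofReal (e y)) y := by
            exact lintegral_congr fun y => heq y
        _ ≤ ∫⁻ y, V.indicator (fun y => ENNReal.ofReal (e y)) y := by
            exact lintegral_mono' Measure.restrict_le_self le_rfl
        _ = ∫⁻ y in V, ENNReal.ofReal (e y) := lintegral_indicator hV _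
        _ = 0 := hz
    rw [hind, mul_zero] at hmono
    exact le_antisymm hmono zero_le
  refine le_antisymm ?_ zero_le
  calc (∫⁻ y in Set.Ioi x, ENNReal.ofReal (e y / (y - x)))
      = ∫⁻ y in ⋃ n : ℕ, Set.Ioi (x + 1 / (n + 1 : ℝ)), ENNReal.ofReal (e y / (y - x)) := by
        rw [← hcover]
    _ ≤ ∑' n : ℕ, ∫⁻ y in Set.Ioi (x + 1 / (n + 1 : ℝ)), ENNReal.ofReal (e y / (y - x)) :=
        lintegral_iUnion_le _ _
    _ = 0 := by
        convert tsum_zero with n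
        simpa [one_div] using hbn n

/-- Any nonnegative function with finite lower integral has an integrable measurable
minorant whose difference has vanishing lower integral. -/
lemma aux_minorant (q : ℝ → ℝ) (hq0 : ∀ y, 0 ≤ q y)
    (hfin : (∫⁻ y, ENNReal.ofReal (q y)) < ⊤) :
    ∃ m : ℝ → ℝ, Measurable m ∧ (∀ y, 0 ≤ m y) ∧ (∀ y, m y ≤ q y) ∧ Integrable m ∧
      (∫⁻ y, ENNReal.ofReal (q y - m y)) = 0 := by
  obtain ⟨g, hgm, hgle, hgint⟩ :=
    exists_measurable_le_lintegral_eq (volume : Measure ℝ) (fun y => ENNReal.ofReal (q y))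
  have hgt : ∀ y, g y ≠ ⊤ := fun y => ((hgle y).trans_lt ENNReal.ofReal_lt_top).ne
  refine ⟨fun y => (g y).toReal, hgm.ennreal_toReal, fun y => ENNReal.toReal_nonneg, ?_, ?_, ?_⟩
  · intro y
    have := ENNReal.toReal_mono ENNReal.ofReal_ne_top (hgle y)
    rwa [ENNReal.toReal_ofReal (hq0 y)] at this
  · refine ⟨(hgm.ennreal_toReal).aestronglyMeasurable, ?_⟩
    rw [hasFiniteIntegral_iff_ofReal (Filter.Eventually.of_forall fun y => ENNReal.toReal_nonneg)]
    have : ∀ y, ENNReal.ofReal (g y).toReal = g y := fun y => ENNReal.ofReal_toReal (hgt y)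
    rw [lintegral_congr this]
    exact hgint ▸ hfin
  · have hofm : ∀ y, ENNReal.ofReal (g y).toReal = g y := fun y => ENNReal.ofReal_toReal (hgt y)
    have hkey : ∀ y, ENNReal.ofReal (q y - (g y).toReal) = ENNReal.ofReal (q y) - g y := by
      intro y
      rw [ENNReal.ofReal_sub _ ENNReal.toReal_nonneg, hofm]
    rw [lintegral_congr hkey]
    have hsum : (∫⁻ y, (g y + (ENNReal.ofReal (q y) - g y))) = ∫⁻ y, ENNReal.ofReal (q y) :=
      lintegral_congr fun y => add_tsub_cancel_of_le (hgle y)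
    rw [lintegral_add_left hgm] at hsum
    have hfin' : (∫⁻ y, g y) ≠ ⊤ := by rw [← hgint]; exact hfin.ne
    have : (∫⁻ y, g y) + (∫⁻ y, (ENNReal.ofReal (q y) - g y)) = (∫⁻ y, g y) + 0 := by
      rw [add_zero, hsum, hgint]
    exact (ENNReal.add_right_inj hfin').mp this

lemma aux_ii (ω : ℝ → ℝ) (hloc : LocallyIntegrable ω volume) (a b : ℝ) :
    IntervalIntegrable ω volume a b := by
  constructor <;>
  exact (hloc.integrableOn_isCompact isCompact_Icc).mono_set Set.Ioc_subset_Icc_self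

lemma aux_double (ω : ℝ → ℝ) (hpos : ∀ x, 0 < ω x) (hloc : LocallyIntegrable ω volume)
    (CA : ℝ) (hCA : 0 < CA)
    (hae : ∀ᵐ x ∂(volume : Measure ℝ), ∀ h > (0:ℝ), (∫ y in (x - h)..x, ω y) ≤ CA * h * ω x)
    (x0 h R : ℝ) (hh : 0 < h) (hR : 1 ≤ R) :
    (∫ y in (x0 - R * h)..x0, ω y) ≤ (2 * CA * R + 1) * ∫ y in (x0 - h)..x0, ω y := by
  have hii := aux_ii ω hloc
  set B := ∫ y in (x0 - h)..x0, ω y with hBdef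
  have hB : 0 < B :=
    intervalIntegral.intervalIntegral_pos_of_pos_on (hii _ _) (fun x _ => hpos x) (by linarith)
  set c := 2 * B / h with hcdef
  have hc : 0 < c := by positivity
  have hIoo : IntegrableOn ω (Set.Ioo (x0 - h) x0) volume :=
    ((hloc.integrableOn_isCompact isCompact_Icc).mono_set Set.Ioo_subset_Icc_self)
  have hBioo : (∫ y in Set.Ioo (x0 - h) x0, ω y) = B := by
    rw [hBdef, intervalIntegral.integral_of_le (by linarith), integral_Ioc_eq_integral_Ioo]
  have hlint : (∫⁻ y in Set.Ioo (x0 - h) x0, ENNReal.ofReal (ω y)) = ENNReal.ofReal B := by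
    rw [← ofReal_integral_eq_lintegral_ofReal hIoo
      (Filter.Eventually.of_forall fun y => (hpos y).le), hBioo]
  have hcheb : volume {x ∈ Set.Ioo (x0 - h) x0 | c ≤ ω x} ≤ ENNReal.ofReal (h / 2) := by
    have h1 : ENNReal.ofReal c * volume.restrict (Set.Ioo (x0 - h) x0)
        {x | ENNReal.ofReal c ≤ ENNReal.ofReal (ω x)} ≤ ENNReal.ofReal B := by
      have := mul_meas_ge_le_lintegral₀ (μ := volume.restrict (Set.Ioo (x0 - h) x0))
        (f := fun x => ENNReal.ofReal (ω x))
        (hIoo.aemeasurable.ennreal_ofReal) (ENNReal.ofReal c)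
      rwa [hlint] at this
    have h2 : volume {x ∈ Set.Ioo (x0 - h) x0 | c ≤ ω x}
        ≤ volume.restrict (Set.Ioo (x0 - h) x0) {x | ENNReal.ofReal c ≤ ENNReal.ofReal (ω x)} := by
      refine le_trans ?_ (Measure.le_restrict_apply _ _)
      apply measure_mono
      intro x hx
      exact ⟨ENNReal.ofReal_le_ofReal hx.2, hx.1⟩
    have h3 : volume {x ∈ Set.Ioo (x0 - h) x0 | c ≤ ω x} * ENNReal.ofReal c
        ≤ ENNReal.ofReal B := by
      rw [mul_comm]; exact le_trans (mul_le_mul_right h2 _) h1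
    have h4 : volume {x ∈ Set.Ioo (x0 - h) x0 | c ≤ ω x} ≤ ENNReal.ofReal B / ENNReal.ofReal c :=
      (ENNReal.le_div_iff_mul_le (Or.inl (by simp [hc])) (Or.inl ENNReal.ofReal_ne_top)).mpr h3
    refine h4.trans ?_
    rw [← ENNReal.ofReal_div_of_pos hc]
    apply ENNReal.ofReal_le_ofReal
    rw [hcdef]
    rw [div_div_eq_mul_div, div_le_iff₀ (by positivity)]
    ring_nf
    nlinarith [hB, hh]
  obtain ⟨x, hxI, hxA, hxc⟩ :
      ∃ x, x ∈ Set.Ioo (x0 - h) x0 ∧ (∀ h' > (0:ℝ), (∫ y in (x - h')..x, ω y) ≤ CA * h' * ω x)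
        ∧ ω x < c := by
    by_contra hcon
    push_neg at hcon
    have hsub : Set.Ioo (x0 - h) x0 ⊆
        {x | ¬ (∀ h' > (0:ℝ), (∫ y in (x - h')..x, ω y) ≤ CA * h' * ω x)}
          ∪ {x ∈ Set.Ioo (x0 - h) x0 | c ≤ ω x} := by
      intro x hx
      by_cases hA : ∀ h' > (0:ℝ), (∫ y in (x - h')..x, ω y) ≤ CA * h' * ω x
      · exact Or.inr ⟨hx, (hcon x hx hA)⟩
      · exact Or.inl hA
    have hnull : volume {x | ¬ (∀ h' > (0:ℝ), (∫ y in (x - h')..x, ω y) ≤ CA * h' * ω x)} = 0 := by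
      have := hae; rw [ae_iff] at this; exact this
    have hle : volume (Set.Ioo (x0 - h) x0)
        ≤ volume ({x | ¬ (∀ h' > (0:ℝ), (∫ y in (x - h')..x, ω y) ≤ CA * h' * ω x)})
          + volume ({x ∈ Set.Ioo (x0 - h) x0 | c ≤ ω x}) :=
      (measure_mono hsub).trans (measure_union_le _ _)
    have := hle.trans (add_le_add le_rfl hcheb)
    rw [hnull, zero_add, Real.volume_Ioo] at this
    rw [ENNReal.ofReal_le_ofReal_iff (by positivity)] at this
    linarith
  have hsplit : (∫ y in (x0 - R * h)..x0, ω y)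
      = (∫ y in (x0 - R * h)..x, ω y) + ∫ y in x..x0, ω y :=
    (intervalIntegral.integral_add_adjacent_intervals (hii _ _) (hii _ _)).symm
  have hmain : (∫ y in (x0 - R * h)..x, ω y) ≤ 2 * CA * R * B := by
    have hH : 0 < x - (x0 - R * h) := by
      have : x0 - h < x := hxI.1
      nlinarith
    have := hxA (x - (x0 - R * h)) hH
    have hx1 : x - (x - (x0 - R * h)) = x0 - R * h := by ring
    rw [hx1] at this
    refine this.trans ?_
    have hωx : 0 ≤ ω x := (hpos x).le
    have hxlt : x - (x0 - R * h) ≤ R * h := by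
      have := hxI.2; linarith
    calc CA * (x - (x0 - R * h)) * ω x ≤ CA * (R * h) * ω x := by gcongr
      _ ≤ CA * (R * h) * c := by
          have : (0:ℝ) ≤ CA * (R * h) := by positivity
          nlinarith
      _ = 2 * CA * R * B := by field_simp [hcdef]; rw [hcdef, mul_div_assoc', mul_comm h, mul_div_assoc, div_self hh.ne', mul_one]
  have htail : (∫ y in x..x0, ω y) ≤ B := by
    have : B = (∫ y in (x0 - h)..x, ω y) + ∫ y in x..x0, ω y :=
      (intervalIntegral.integral_add_adjacent_intervals (hii _ _) (hii _ _)).symm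
    have hnn : 0 ≤ ∫ y in (x0 - h)..x, ω y :=
      intervalIntegral.integral_nonneg (by linarith [hxI.1]) (fun u _ => (hpos u).le)
    linarith
  rw [hsplit]
  nlinarith [hB]

lemma aux_dyadic {t : ℝ} (h2 : 2 ≤ t) : ∃ k : ℕ, (2:ℝ)^(k+1) ≤ t ∧ t < 2^(k+2) := by
  have hex : ∃ n : ℕ, t < 2^(n+2) := by
    obtain ⟨n, hn⟩ := pow_unbounded_of_one_lt t (one_lt_two (α := ℝ))
    exact ⟨n, hn.trans_le (pow_le_pow_right₀ one_le_two (by omega))⟩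
  classical
  refine ⟨Nat.find hex, ?_, Nat.find_spec hex⟩
  rcases Nat.eq_zero_or_pos (Nat.find hex) with h0 | h0
  · rw [h0]; norm_num; linarith
  · obtain ⟨m, hm⟩ := Nat.exists_eq_succ_of_ne_zero h0.ne'
    have := Nat.find_min hex (m := m) (by omega)
    push_neg at this
    rw [hm]
    exact le_of_le_of_eq this (by ring_nf)

/-- Weak-type boundedness of a one-sided sublinear operator on `L^{1,λ}_+(ω)`,
`ω ∈ A_1^+`: `γ·|{x ∈ (x0,x0+h) : |T⁺f(x)| > γ}| ≤ C'·Φ⁺_{ω,λ,1}(x0,h)·‖f‖_{L^{1,λ}_+(ω)}`. -/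
theorem sublinear_weak_type_morrey (lam : ℝ) (hlam0 : 0 ≤ lam) (hlam1 : lam < 1)
    (ω : ℝ → ℝ) (hpos : ∀ x, 0 < ω x) (hloc : LocallyIntegrable ω volume)
    (hA : MemA1Plus ω)
    (T : (ℝ → ℝ) → ℝ → ℝ)
    (hsub : ∀ f g : ℝ → ℝ, ∀ᵐ x ∂(volume : Measure ℝ),
      |T (f + g) x| ≤ |T f x| + |T g x|)
    (hsize : ∃ Cs > (0:ℝ), ∀ f : ℝ → ℝ, ∀ᵐ x ∂(volume : Measure ℝ),
      ENNReal.ofReal (|T f x|) ≤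
        ENNReal.ofReal Cs * ∫⁻ y in Set.Ioi x, ENNReal.ofReal (|f y| / (y - x)))
    (hweak : ∃ Cw > (0:ℝ), ∀ f : ℝ → ℝ, Integrable f → ∀ γ > (0:ℝ),
      ENNReal.ofReal γ * volume {x : ℝ | γ < |T f x|}
        ≤ ENNReal.ofReal (Cw * ∫ x, |f x|)) :
    ∃ C' > (0:ℝ), ∀ f : ℝ → ℝ, morreyNorm ω 1 lam 1 f < ⊤ →
      ∀ (x0 h γ : ℝ), 0 < h → 0 < γ →
        ENNReal.ofReal γ * volume {x ∈ Set.Ioo x0 (x0 + h) | γ < |T f x|}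
          ≤ ENNReal.ofReal C' * ENNReal.ofReal (Phi ω lam 1 x0 h) *
              morreyNorm ω 1 lam 1 f := by
  obtain ⟨CA, hCA, hae⟩ := hA
  obtain ⟨Cs, hCs, hsz⟩ := hsize
  obtain ⟨Cw, hCw, hwk⟩ := hweak
  set r : ℝ := (2:ℝ) ^ (lam - 1) with hrdef
  have hr0 : 0 < r := Real.rpow_pos_of_pos two_pos _
  have hr1 : r < 1 := Real.rpow_lt_one_of_one_lt_of_neg one_lt_two (by linarith)
  set S : ℝ := (1 - r)⁻¹ with hSdef
  have hS : 0 < S := by rw [hSdef]; exact inv_pos.mpr (by linarith)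
  refine ⟨4*Cw*(4*CA+1) + 8*Cs*(2*CA+1)*S, by positivity, ?_⟩
  intro f hN x0 h γ hh hγ
  set N := morreyNorm ω 1 lam 1 f with hNdef
  have hNtop : N ≠ ⊤ := hN.ne
  -- basic facts about Phi
  have hPhiInt : ∀ H : ℝ, (∫ y in (x0 - H)..x0, (ω y) ^ (1:ℝ)) = ∫ y in (x0 - H)..x0, ω y := by
    intro H
    exact intervalIntegral.integral_congr (fun y _ => Real.rpow_one _)
  have hPhiPos : ∀ H : ℝ, 0 < H → 0 < Phi ω lam 1 x0 H := by
    intro H hH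
    rw [Phi, hPhiInt]
    have h1 : 0 < H ^ (lam - 1) := Real.rpow_pos_of_pos hH _
    have h2 : 0 < ∫ y in (x0 - H)..x0, ω y :=
      intervalIntegral.intervalIntegral_pos_of_pos_on (aux_ii ω hloc _ _)
        (fun x _ => hpos x) (by linarith)
    positivity
  -- the Morrey-norm control of local integrals
  have hM : ∀ H : ℝ, 0 < H → (∫⁻ y in Set.Ioo x0 (x0 + H), ENNReal.ofReal (|f y|))
      ≤ ENNReal.ofReal (Phi ω lam 1 x0 H) * N := by
    intro H hH
    have hterm : ((∫⁻ y in Set.Ioo x0 (x0 + H), ENNReal.ofReal (|f y| ^ (1:ℝ))) /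
        ENNReal.ofReal (Phi ω lam 1 x0 H)) ^ ((1:ℝ) / 1) ≤ N := by
      rw [hNdef, morreyNorm]
      refine le_trans ?_ (le_iSup _ x0)
      refine le_trans ?_ (le_iSup _ H)
      exact le_iSup (fun _ : 0 < H => ((∫⁻ y in Set.Ioo x0 (x0 + H),
        ENNReal.ofReal (|f y| ^ (1:ℝ))) / ENNReal.ofReal (Phi ω lam 1 x0 H)) ^ ((1:ℝ)/1)) hH
    rw [show (1:ℝ)/1 = 1 by norm_num, ENNReal.rpow_one] at hterm
    have heq : (∫⁻ y in Set.Ioo x0 (x0 + H), ENNReal.ofReal (|f y| ^ (1:ℝ)))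
        = ∫⁻ y in Set.Ioo x0 (x0 + H), ENNReal.ofReal (|f y|) := by
      exact lintegral_congr fun y => by rw [Real.rpow_one]
    rw [heq] at hterm
    have hb0 : ENNReal.ofReal (Phi ω lam 1 x0 H) ≠ 0 := by
      simp [ENNReal.ofReal_eq_zero, not_le, hPhiPos H hH]
    rw [ENNReal.div_le_iff_le_mul (Or.inl hb0) (Or.inl ENNReal.ofReal_ne_top)] at hterm
    rwa [mul_comm] at hterm
  -- doubling for Phi
  have hPhiD : ∀ R : ℝ, 1 ≤ R → Phi ω lam 1 x0 (R * h)
      ≤ (2*CA*R + 1) * R ^ (lam - 1) * Phi ω lam 1 x0 h := by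
    intro R hR
    rw [Phi, Phi, hPhiInt, hPhiInt]
    have hmul : (R * h) ^ (lam - 1) = R ^ (lam - 1) * h ^ (lam - 1) :=
      Real.mul_rpow (by linarith) hh.le
    rw [hmul]
    have hd := aux_double ω hpos hloc CA hCA hae x0 h R hh hR
    have h1 : 0 < R ^ (lam - 1) := Real.rpow_pos_of_pos (by linarith) _
    have h2 : 0 < h ^ (lam - 1) := Real.rpow_pos_of_pos hh _
    calc R ^ (lam-1) * h ^ (lam-1) * ∫ y in (x0 - R*h)..x0, ω y
        ≤ R ^ (lam-1) * h ^ (lam-1) * ((2*CA*R + 1) * ∫ y in (x0 - h)..x0, ω y) := by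
          apply mul_le_mul_of_nonneg_left hd (by positivity)
      _ = (2*CA*R + 1) * R ^ (lam-1) * (h ^ (lam-1) * ∫ y in (x0 - h)..x0, ω y) := by ring
  -- the decomposition of f
  set V : Set ℝ := Set.Ioo x0 (x0 + 2*h) with hVdef
  have hVmeas : MeasurableSet V := measurableSet_Ioo
  have hVfin : (∫⁻ y in V, ENNReal.ofReal (|f y|)) < ⊤ :=
    lt_of_le_of_lt (hM (2*h) (by linarith))
      (ENNReal.mul_lt_top ENNReal.ofReal_lt_top hN)
  set fplus : ℝ → ℝ := V.indicator (fun y => max (f y) 0) with hfplusdef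
  set fminus : ℝ → ℝ := V.indicator (fun y => max (-(f y)) 0) with hfminusdef
  have hfplus0 : ∀ y, 0 ≤ fplus y :=
    fun y => Set.indicator_nonneg (fun y _ => le_max_right _ _) y
  have hfminus0 : ∀ y, 0 ≤ fminus y :=
    fun y => Set.indicator_nonneg (fun y _ => le_max_right _ _) y
  have hcut : ∀ q : ℝ → ℝ, (∀ y, 0 ≤ q y) → (∀ y, q y ≤ |f y|) → (∀ y, y ∉ V → q y = 0) →
      (∫⁻ y, ENNReal.ofReal (q y)) ≤ ∫⁻ y in V, ENNReal.ofReal (|f y|) := by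
    intro q hq0 hqf hqV
    calc (∫⁻ y, ENNReal.ofReal (q y))
        = ∫⁻ y, V.indicator (fun y => ENNReal.ofReal (q y)) y := by
          refine lintegral_congr fun y => ?_
          by_cases hy : y ∈ V
          · rw [Set.indicator_of_mem hy]
          · rw [Set.indicator_of_notMem hy, hqV y hy]; simp
      _ = ∫⁻ y in V, ENNReal.ofReal (q y) := lintegral_indicator hVmeas _
      _ ≤ ∫⁻ y in V, ENNReal.ofReal (|f y|) :=
          lintegral_mono fun y => ENNReal.ofReal_le_ofReal (hqf y)
  have hfplus_abs : ∀ y, fplus y ≤ |f y| := by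
    intro y
    by_cases hy : y ∈ V
    · rw [hfplusdef, Set.indicator_of_mem hy]
      exact max_le (le_abs_self _) (abs_nonneg _)
    · rw [hfplusdef, Set.indicator_of_notMem hy]; exact abs_nonneg _
  have hfminus_abs : ∀ y, fminus y ≤ |f y| := by
    intro y
    by_cases hy : y ∈ V
    · rw [hfminusdef, Set.indicator_of_mem hy]
      exact max_le (neg_le_abs _) (abs_nonneg _)
    · rw [hfminusdef, Set.indicator_of_notMem hy]; exact abs_nonneg _
  have hfplusV : ∀ y, y ∉ V → fplus y = 0 := fun y hy => Set.indicator_of_notMem hy _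
  have hfminusV : ∀ y, y ∉ V → fminus y = 0 := fun y hy => Set.indicator_of_notMem hy _
  obtain ⟨m1, hm1meas, hm10, hm1le, hm1int, hm1z⟩ :=
    aux_minorant fplus hfplus0
      (lt_of_le_of_lt (hcut fplus hfplus0 hfplus_abs hfplusV) hVfin)
  obtain ⟨m2, hm2meas, hm20, hm2le, hm2int, hm2z⟩ :=
    aux_minorant fminus hfminus0
      (lt_of_le_of_lt (hcut fminus hfminus0 hfminus_abs hfminusV) hVfin)
  set f1 : ℝ → ℝ := fun y => m1 y - m2 y with hf1def
  have hf1int : Integrable f1 := hm1int.sub hm2int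
  set e1 : ℝ → ℝ := fun y => fplus y - m1 y with he1def
  set e2 : ℝ → ℝ := fun y => fminus y - m2 y with he2def
  set g2 : ℝ → ℝ := fun y => -(e2 y) with hg2def
  set ffar : ℝ → ℝ := Vᶜ.indicator f with hffardef
  have he10 : ∀ y, 0 ≤ e1 y := fun y => sub_nonneg.mpr (hm1le y)
  have he20 : ∀ y, 0 ≤ e2 y := fun y => sub_nonneg.mpr (hm2le y)
  have hm1V : ∀ y, y ∉ V → m1 y = 0 := by
    intro y hy
    have := hm1le y
    rw [hfplusV y hy] at this
    exact le_antisymm this (hm10 y)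
  have hm2V : ∀ y, y ∉ V → m2 y = 0 := by
    intro y hy
    have := hm2le y
    rw [hfminusV y hy] at this
    exact le_antisymm this (hm20 y)
  have he1V : ∀ y, y ∉ V → e1 y = 0 := by
    intro y hy; rw [he1def]; simp only []; rw [hfplusV y hy, hm1V y hy, sub_zero]
  have he2V : ∀ y, y ∉ V → e2 y = 0 := by
    intro y hy; rw [he2def]; simp only []; rw [hfminusV y hy, hm2V y hy, sub_zero]
  have hdecomp : f = f1 + (e1 + (g2 + ffar)) := by
    funext y
    simp only [Pi.add_apply, hf1def, he1def, he2def, hg2def, hffardef]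
    by_cases hy : y ∈ V
    · rw [Set.indicator_of_notMem (by simp [hy] : y ∉ Vᶜ)]
      rw [hfplusdef, hfminusdef, Set.indicator_of_mem hy, Set.indicator_of_mem hy]
      have := max_zero_sub_max_neg_zero_eq_self (f y)
      linarith [this]
    · rw [Set.indicator_of_mem (by simp [hy] : y ∈ Vᶜ)]
      rw [hfplusV y hy, hfminusV y hy, hm1V y hy, hm2V y hy]
      ring
  -- T vanishes a.e. on the error terms
  have hze1 : ∀ᵐ x ∂(volume : Measure ℝ), |T e1 x| = 0 := by
    filter_upwards [hsz e1] with x hx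
    have hz1V : (∫⁻ y in V, ENNReal.ofReal (e1 y)) = 0 := by
      refine le_antisymm ?_ zero_le
      refine le_trans (lintegral_mono' Measure.restrict_le_self le_rfl) ?_
      exact le_of_eq hm1z
    have haz : (∫⁻ y in Set.Ioi x, ENNReal.ofReal (|e1 y| / (y - x))) = 0 := by
      have hcongr : (∫⁻ y in Set.Ioi x, ENNReal.ofReal (|e1 y| / (y - x)))
          = ∫⁻ y in Set.Ioi x, ENNReal.ofReal (e1 y / (y - x)) :=
        lintegral_congr fun y => by rw [abs_of_nonneg (he10 y)]
      rw [hcongr]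
      exact aux_zero_weight V hVmeas e1 he10 he1V hz1V x
    rw [haz, mul_zero] at hx
    have := ENNReal.ofReal_eq_zero.mp (le_antisymm hx zero_le)
    exact le_antisymm this (abs_nonneg _)
  have hze2 : ∀ᵐ x ∂(volume : Measure ℝ), |T g2 x| = 0 := by
    filter_upwards [hsz g2] with x hx
    have hz2V : (∫⁻ y in V, ENNReal.ofReal (e2 y)) = 0 := by
      refine le_antisymm ?_ zero_le
      refine le_trans (lintegral_mono' Measure.restrict_le_self le_rfl) ?_
      exact le_of_eq hm2z
    have haz : (∫⁻ y in Set.Ioi x, ENNReal.ofReal (|g2 y| / (y - x))) = 0 := by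
      have hcongr : (∫⁻ y in Set.Ioi x, ENNReal.ofReal (|g2 y| / (y - x)))
          = ∫⁻ y in Set.Ioi x, ENNReal.ofReal (e2 y / (y - x)) := by
        refine lintegral_congr fun y => ?_
        rw [hg2def]
        simp only [abs_neg]
        rw [abs_of_nonneg (he20 y)]
      rw [hcongr]
      exact aux_zero_weight V hVmeas e2 he20 he2V hz2V x
    rw [haz, mul_zero] at hx
    have := ENNReal.ofReal_eq_zero.mp (le_antisymm hx zero_le)
    exact le_antisymm this (abs_nonneg _)
  -- a.e. pointwise splitting
  have hcomb : ∀ᵐ x ∂(volume : Measure ℝ), |T f x| ≤ |T f1 x| + |T ffar x| := by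
    filter_upwards [hsub f1 (e1 + (g2 + ffar)), hsub e1 (g2 + ffar), hsub g2 ffar,
      hze1, hze2] with x h1 h2 h3 h4 h5
    rw [← hdecomp] at h1
    linarith
  -- far part pointwise bound
  set Φ : ℝ := Phi ω lam 1 x0 h with hΦdef
  have hΦ0 : 0 < Φ := hPhiPos h hh
  set D : ℝ≥0∞ := ENNReal.ofReal (4*(2*CA+1)/h * Φ) with hDdef
  have hfar_int : ∀ x ∈ Set.Ioo x0 (x0 + h),
      (∫⁻ y in Set.Ioi x, ENNReal.ofReal (|ffar y| / (y - x)))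
        ≤ D * ENNReal.ofReal S * N := by
    intro x hx
    set A : ℕ → Set ℝ := fun k => Set.Ico (x0 + 2^(k+1)*h) (x0 + 2^(k+2)*h) with hAdef
    have hstep0 : (∫⁻ y in Set.Ioi x, ENNReal.ofReal (|ffar y| / (y - x)))
        ≤ ∑' k : ℕ, ∫⁻ y in A k, ENNReal.ofReal (|ffar y| / (y - x)) := by
      have hU : ∀ y ∈ Set.Ioi x, ENNReal.ofReal (|ffar y| / (y - x))
          = (⋃ k, A k).indicator (fun y => ENNReal.ofReal (|ffar y| / (y - x))) y := by
        intro y hy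
        by_cases hyU : y ∈ ⋃ k, A k
        · rw [Set.indicator_of_mem hyU]
        · rw [Set.indicator_of_notMem hyU]
          have hyx : x < y := hy
          have hyl : x0 < y := lt_trans hx.1 hyx
          by_cases hcase : x0 + 2*h ≤ y
          · exfalso
            apply hyU
            obtain ⟨k, hk1, hk2⟩ := aux_dyadic (t := (y - x0)/h)
              (by rw [le_div_iff₀ hh]; linarith)
            rw [le_div_iff₀ hh] at hk1
            rw [div_lt_iff₀ hh] at hk2
            exact Set.mem_iUnion.mpr ⟨k, ⟨by linarith, by linarith⟩⟩
          · push_neg at hcase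
            have hyV : y ∈ V := ⟨hyl, hcase⟩
            have hf0 : ffar y = 0 := Set.indicator_of_notMem (by simp [hyV]) f
            rw [hf0]
            simp
      calc (∫⁻ y in Set.Ioi x, ENNReal.ofReal (|ffar y| / (y - x)))
          = ∫⁻ y in Set.Ioi x,
              (⋃ k, A k).indicator (fun y => ENNReal.ofReal (|ffar y| / (y - x))) y := by
            refine lintegral_congr_ae ?_
            filter_upwards [ae_restrict_mem measurableSet_Ioi] with y hy
            exact hU y hy
        _ ≤ ∫⁻ y, (⋃ k, A k).indicator (fun y => ENNReal.ofReal (|ffar y| / (y - x))) y :=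
            lintegral_mono' Measure.restrict_le_self le_rfl
        _ = ∫⁻ y in ⋃ k, A k, ENNReal.ofReal (|ffar y| / (y - x)) :=
            lintegral_indicator (MeasurableSet.iUnion fun k => measurableSet_Ico) _
        _ ≤ ∑' k : ℕ, ∫⁻ y in A k, ENNReal.ofReal (|ffar y| / (y - x)) :=
            lintegral_iUnion_le _ _
    have hstepk : ∀ k : ℕ, (∫⁻ y in A k, ENNReal.ofReal (|ffar y| / (y - x)))
        ≤ (D * N) * (ENNReal.ofReal r)^k := by
      intro k
      have hp : (0:ℝ) < 2^k := by positivity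
      have hp1 : (1:ℝ) ≤ 2^k := one_le_pow₀ one_le_two
      have hptw : ∀ y ∈ A k, ENNReal.ofReal (|ffar y| / (y - x))
          ≤ ENNReal.ofReal (((2:ℝ)^k * h)⁻¹) * ENNReal.ofReal (|f y|) := by
        intro y hy
        rw [← ENNReal.ofReal_mul (by positivity)]
        apply ENNReal.ofReal_le_ofReal
        have hy1 : x0 + 2^(k+1)*h ≤ y := hy.1
        have hx2 : x < x0 + h := hx.2
        have hyx : (2:ℝ)^k * h ≤ y - x := by
          have h21 : (2:ℝ)^(k+1) = 2 * 2^k := by ring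
          nlinarith
        have hyx0 : (0:ℝ) < y - x := lt_of_lt_of_le (by positivity) hyx
        have hffar : |ffar y| ≤ |f y| := by
          rw [hffardef]
          by_cases hyc : y ∈ Vᶜ
          · rw [Set.indicator_of_mem hyc]
          · rw [Set.indicator_of_notMem hyc]; simp [abs_nonneg]
        calc |ffar y| / (y - x) ≤ |f y| / (y - x) := by gcongr
          _ ≤ |f y| / ((2:ℝ)^k * h) := by
              apply div_le_div_of_nonneg_left (abs_nonneg _) (by positivity) hyx
          _ = ((2:ℝ)^k * h)⁻¹ * |f y| := by rw [div_eq_mul_inv, mul_comm]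
      have hsubA : A k ⊆ Set.Ioo x0 (x0 + 2^(k+2)*h) := by
        intro y hy
        refine ⟨?_, hy.2⟩
        have : (0:ℝ) < 2^(k+1)*h := by positivity
        have := hy.1
        linarith
      have hR1 : (1:ℝ) ≤ (2:ℝ)^(k+2) := one_le_pow₀ one_le_two
      have hrpow : ((2:ℝ)^(k+2)) ^ (lam-1) = r^(k+2) := by
        rw [hrdef, ← Real.rpow_natCast (2:ℝ) (k+2), ← Real.rpow_mul (by norm_num : (0:ℝ) ≤ 2),
          ← Real.rpow_natCast ((2:ℝ) ^ (lam-1)) (k+2), ← Real.rpow_mul (by norm_num : (0:ℝ) ≤ 2),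
          mul_comm]
      have hreal : ((2:ℝ)^k * h)⁻¹ * ((2*CA*(2:ℝ)^(k+2) + 1) * ((2:ℝ)^(k+2)) ^ (lam-1) * Φ)
          ≤ 4*(2*CA+1)/h * Φ * r^k := by
        rw [hrpow]
        have e1 : (2:ℝ)^(k+2) = 4 * 2^k := by ring
        have e2 : r^(k+2) = r^k * r^2 := by ring
        rw [e1, e2]
        have hr2 : r^2 ≤ 1 := pow_le_one₀ hr0.le hr1.le
        calc ((2:ℝ)^k * h)⁻¹ * ((2*CA*(4*2^k) + 1) * (r^k * r^2) * Φ)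
            ≤ ((2:ℝ)^k * h)⁻¹ * (((2*CA+1)*(4*2^k)) * (r^k * 1) * Φ) := by
              apply mul_le_mul_of_nonneg_left _ (by positivity)
              apply mul_le_mul_of_nonneg_right _ hΦ0.le
              apply mul_le_mul (by nlinarith) (by nlinarith [pow_nonneg hr0.le k])
                (by positivity) (by positivity)
          _ = 4*(2*CA+1)/h * Φ * r^k := by field_simp
      calc (∫⁻ y in A k, ENNReal.ofReal (|ffar y| / (y - x)))
          ≤ ∫⁻ y in A k, ENNReal.ofReal (((2:ℝ)^k * h)⁻¹) * ENNReal.ofReal (|f y|) := by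
            apply lintegral_mono_ae
            filter_upwards [ae_restrict_mem measurableSet_Ico] with y hy
            exact hptw y hy
        _ = ENNReal.ofReal (((2:ℝ)^k * h)⁻¹) * ∫⁻ y in A k, ENNReal.ofReal (|f y|) :=
            lintegral_const_mul' _ _ ENNReal.ofReal_ne_top
        _ ≤ ENNReal.ofReal (((2:ℝ)^k * h)⁻¹) * ∫⁻ y in Set.Ioo x0 (x0 + 2^(k+2)*h),
              ENNReal.ofReal (|f y|) :=
            mul_le_mul_right (lintegral_mono_set hsubA) _
        _ ≤ ENNReal.ofReal (((2:ℝ)^k * h)⁻¹) *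
              (ENNReal.ofReal (Phi ω lam 1 x0 ((2:ℝ)^(k+2) * h)) * N) :=
            mul_le_mul_right (hM ((2:ℝ)^(k+2)*h) (by positivity)) _
        _ ≤ ENNReal.ofReal (((2:ℝ)^k * h)⁻¹) *
              (ENNReal.ofReal ((2*CA*(2:ℝ)^(k+2) + 1) * ((2:ℝ)^(k+2)) ^ (lam-1) * Φ) * N) := by
            apply mul_le_mul_right
            apply mul_le_mul_left
            exact ENNReal.ofReal_le_ofReal (hPhiD ((2:ℝ)^(k+2)) hR1)
        _ = ENNReal.ofReal (((2:ℝ)^k * h)⁻¹ *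
              ((2*CA*(2:ℝ)^(k+2) + 1) * ((2:ℝ)^(k+2)) ^ (lam-1) * Φ)) * N := by
            rw [ENNReal.ofReal_mul
              (by positivity : (0:ℝ) ≤ ((2:ℝ)^k * h)⁻¹)]
            ring
        _ ≤ ENNReal.ofReal (4*(2*CA+1)/h * Φ * r^k) * N :=
            mul_le_mul_left (ENNReal.ofReal_le_ofReal hreal) _
        _ = (D * N) * (ENNReal.ofReal r)^k := by
            rw [ENNReal.ofReal_mul (by positivity), ENNReal.ofReal_pow hr0.le, hDdef]
            ring
    calc (∫⁻ y in Set.Ioi x, ENNReal.ofReal (|ffar y| / (y - x)))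
        ≤ ∑' k : ℕ, ∫⁻ y in A k, ENNReal.ofReal (|ffar y| / (y - x)) := hstep0
      _ ≤ ∑' k : ℕ, (D * N) * (ENNReal.ofReal r)^k := ENNReal.tsum_le_tsum hstepk
      _ = (D * N) * ∑' k : ℕ, (ENNReal.ofReal r)^k := ENNReal.tsum_mul_left
      _ = (D * N) * (1 - ENNReal.ofReal r)⁻¹ := by rw [ENNReal.tsum_geometric]
      _ = D * ENNReal.ofReal S * N := by
          have : (1 - ENNReal.ofReal r)⁻¹ = ENNReal.ofReal S := by
            rw [← ENNReal.ofReal_one, ← ENNReal.ofReal_sub 1 hr0.le, hSdef,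
              ← ENNReal.ofReal_inv_of_pos (by linarith)]
          rw [this]; ring
  -- weak-type estimate for the good part
  have hwk1 : ENNReal.ofReal (γ/2) * volume {x : ℝ | γ/2 < |T f1 x|}
      ≤ ENNReal.ofReal Cw * (ENNReal.ofReal (2*(4*CA+1)) * (ENNReal.ofReal Φ * N)) := by
    refine le_trans (hwk f1 hf1int (γ/2) (by positivity)) ?_
    rw [ENNReal.ofReal_mul hCw.le]
    apply mul_le_mul_right
    have hint1 : ENNReal.ofReal (∫ x, |f1 x|) = ∫⁻ x, ENNReal.ofReal (|f1 x|) :=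
      ofReal_integral_eq_lintegral_ofReal hf1int.abs
        (Filter.Eventually.of_forall fun x => abs_nonneg _)
    rw [hint1]
    calc (∫⁻ x, ENNReal.ofReal (|f1 x|))
        ≤ ∫⁻ x, (ENNReal.ofReal (m1 x) + ENNReal.ofReal (m2 x)) := by
          apply lintegral_mono
          intro x
          calc ENNReal.ofReal (|f1 x|) ≤ ENNReal.ofReal (m1 x + m2 x) := by
                apply ENNReal.ofReal_le_ofReal
                rw [hf1def]
                exact abs_le.mpr ⟨by simp only []; linarith [hm10 x, hm20 x],
                  by simp only []; linarith [hm10 x, hm20 x]⟩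
            _ ≤ _ := ENNReal.ofReal_add_le
      _ = (∫⁻ x, ENNReal.ofReal (m1 x)) + ∫⁻ x, ENNReal.ofReal (m2 x) :=
          lintegral_add_left (hm1meas.ennreal_ofReal) _
      _ ≤ (∫⁻ y in V, ENNReal.ofReal (|f y|)) + (∫⁻ y in V, ENNReal.ofReal (|f y|)) := by
          apply add_le_add
          · exact le_trans (lintegral_mono fun y => ENNReal.ofReal_le_ofReal (hm1le y))
              (hcut fplus hfplus0 hfplus_abs hfplusV)
          · exact le_trans (lintegral_mono fun y => ENNReal.ofReal_le_ofReal (hm2le y))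
              (hcut fminus hfminus0 hfminus_abs hfminusV)
      _ = 2 * ∫⁻ y in V, ENNReal.ofReal (|f y|) := (two_mul _).symm
      _ ≤ 2 * (ENNReal.ofReal (Phi ω lam 1 x0 (2*h)) * N) :=
          mul_le_mul_right (hM (2*h) (by linarith)) _
      _ ≤ ENNReal.ofReal (2*(4*CA+1)) * (ENNReal.ofReal Φ * N) := by
          have h2h : Phi ω lam 1 x0 (2*h) ≤ (4*CA+1) * Φ := by
            refine (hPhiD 2 (by norm_num)).trans ?_
            have hkey : (2*CA*2+1) * (2:ℝ)^(lam-1) ≤ 4*CA+1 := by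
              rw [← hrdef]
              nlinarith [hr0.le, hr1.le]
            rw [hΦdef]
            have := hPhiPos h hh
            nlinarith
          calc (2:ℝ≥0∞) * (ENNReal.ofReal (Phi ω lam 1 x0 (2*h)) * N)
              ≤ 2 * (ENNReal.ofReal ((4*CA+1) * Φ) * N) :=
                mul_le_mul_right (mul_le_mul_left (ENNReal.ofReal_le_ofReal h2h) N) 2
            _ = ENNReal.ofReal (2*(4*CA+1)) * (ENNReal.ofReal Φ * N) := by
                rw [ENNReal.ofReal_mul (by norm_num : (0:ℝ) ≤ 2),
                  ENNReal.ofReal_mul (by positivity : (0:ℝ) ≤ (4*CA+1))]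
                rw [ENNReal.ofReal_ofNat]
                ring
  -- set decomposition
  set E1 : Set ℝ := {x : ℝ | γ/2 < |T f1 x|} with hE1def
  set E2 : Set ℝ := {x ∈ Set.Ioo x0 (x0 + h) | γ/2 < |T ffar x|} with hE2def
  have hEsub : volume {x ∈ Set.Ioo x0 (x0 + h) | γ < |T f x|} ≤ volume E1 + volume E2 := by
    have hZ : volume {x : ℝ | ¬ (|T f x| ≤ |T f1 x| + |T ffar x|)} = 0 := by
      have := hcomb; rw [ae_iff] at this; exact this
    have hsubset : {x ∈ Set.Ioo x0 (x0 + h) | γ < |T f x|}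
        ⊆ {x : ℝ | ¬ (|T f x| ≤ |T f1 x| + |T ffar x|)} ∪ (E1 ∪ E2) := by
      rintro x ⟨hxI, hxγ⟩
      by_cases hx : |T f x| ≤ |T f1 x| + |T ffar x|
      · right
        by_cases h1 : γ/2 < |T f1 x|
        · exact Or.inl h1
        · push_neg at h1
          exact Or.inr ⟨hxI, by linarith⟩
      · exact Or.inl hx
    calc volume {x ∈ Set.Ioo x0 (x0 + h) | γ < |T f x|}
        ≤ volume ({x : ℝ | ¬ (|T f x| ≤ |T f1 x| + |T ffar x|)} ∪ (E1 ∪ E2)) :=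
          measure_mono hsubset
      _ ≤ volume {x : ℝ | ¬ (|T f x| ≤ |T f1 x| + |T ffar x|)} + volume (E1 ∪ E2) :=
          measure_union_le _ _
      _ = volume (E1 ∪ E2) := by rw [hZ, zero_add]
      _ ≤ volume E1 + volume E2 := measure_union_le _ _
  -- E2 contribution
  have hE2bd : ENNReal.ofReal (γ/2) * volume E2
      ≤ ENNReal.ofReal (4*Cs*(2*CA+1)*S*Φ) * N := by
    by_cases hv : volume E2 = 0
    · rw [hv, mul_zero]; exact zero_le
    · have hfae := hsz ffar
      rw [ae_iff] at hfae
      have hns : ¬ (E2 ⊆ {x : ℝ | ¬ (ENNReal.ofReal (|T ffar x|) ≤ ENNReal.ofReal Cs *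
          ∫⁻ y in Set.Ioi x, ENNReal.ofReal (|ffar y| / (y - x)))}) :=
        fun hsub' => hv (measure_mono_null hsub' hfae)
      obtain ⟨x, hxE2, hxnot⟩ := Set.not_subset.mp hns
      simp only [Set.mem_setOf_eq, not_not] at hxnot
      have hxI : x ∈ Set.Ioo x0 (x0 + h) := hxE2.1
      have hγ2 : ENNReal.ofReal (γ/2) ≤ ENNReal.ofReal Cs * (D * ENNReal.ofReal S * N) := by
        refine le_trans ?_ (le_trans hxnot (mul_le_mul_right (hfar_int x hxI) _))
        exact ENNReal.ofReal_le_ofReal (le_of_lt hxE2.2)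
      calc ENNReal.ofReal (γ/2) * volume E2
          ≤ (ENNReal.ofReal Cs * (D * ENNReal.ofReal S * N)) * volume E2 :=
            mul_le_mul_left hγ2 _
        _ ≤ (ENNReal.ofReal Cs * (D * ENNReal.ofReal S * N)) * volume (Set.Ioo x0 (x0 + h)) :=
            mul_le_mul_right (measure_mono (Set.sep_subset _ _)) _
        _ = (ENNReal.ofReal Cs * (D * ENNReal.ofReal S * N)) * ENNReal.ofReal h := by
            rw [Real.volume_Ioo]
            norm_num
        _ = (ENNReal.ofReal Cs * D * ENNReal.ofReal S * ENNReal.ofReal h) * N := by ring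
        _ = ENNReal.ofReal (Cs * (4*(2*CA+1)/h * Φ) * S * h) * N := by
            rw [hDdef, ← ENNReal.ofReal_mul hCs.le,
              ← ENNReal.ofReal_mul (by positivity : (0:ℝ) ≤ Cs * (4*(2*CA+1)/h * Φ)),
              ← ENNReal.ofReal_mul (by positivity : (0:ℝ) ≤ Cs * (4*(2*CA+1)/h * Φ) * S)]
        _ = ENNReal.ofReal (4*Cs*(2*CA+1)*S*Φ) * N := by
            congr 1
            rw [show Cs * (4*(2*CA+1)/h * Φ) * S * h = 4*Cs*(2*CA+1)*S*Φ * (h/h) by ring,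
              div_self hh.ne', mul_one]
  -- final assembly
  have hsplitγ : ENNReal.ofReal γ = 2 * ENNReal.ofReal (γ/2) := by
    rw [← ENNReal.ofReal_ofNat, ← ENNReal.ofReal_mul (by norm_num : (0:ℝ) ≤ 2)]
    congr 1
    ring
  have hterm1 : 2 * (ENNReal.ofReal Cw * (ENNReal.ofReal (2*(4*CA+1)) * (ENNReal.ofReal Φ * N)))
      = ENNReal.ofReal (4*Cw*(4*CA+1)) * ENNReal.ofReal Φ * N := by
    rw [← ENNReal.ofReal_ofNat 2]
    rw [show (ENNReal.ofReal 2 * (ENNReal.ofReal Cw *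
        (ENNReal.ofReal (2*(4*CA+1)) * (ENNReal.ofReal Φ * N))))
        = (ENNReal.ofReal 2 * ENNReal.ofReal Cw * ENNReal.ofReal (2*(4*CA+1)))
          * ENNReal.ofReal Φ * N from by ring]
    rw [← ENNReal.ofReal_mul (by norm_num : (0:ℝ) ≤ 2),
      ← ENNReal.ofReal_mul (by positivity : (0:ℝ) ≤ 2*Cw)]
    rw [show (2:ℝ)*Cw*(2*(4*CA+1)) = 4*Cw*(4*CA+1) from by ring]
  have hterm2 : 2 * (ENNReal.ofReal (4*Cs*(2*CA+1)*S*Φ) * N)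
      = ENNReal.ofReal (8*Cs*(2*CA+1)*S) * ENNReal.ofReal Φ * N := by
    rw [← ENNReal.ofReal_ofNat 2]
    rw [show (ENNReal.ofReal 2 * (ENNReal.ofReal (4*Cs*(2*CA+1)*S*Φ) * N))
        = (ENNReal.ofReal 2 * ENNReal.ofReal (4*Cs*(2*CA+1)*S*Φ)) * N from by ring]
    rw [← ENNReal.ofReal_mul (by norm_num : (0:ℝ) ≤ 2)]
    rw [show (2:ℝ)*(4*Cs*(2*CA+1)*S*Φ) = (8*Cs*(2*CA+1)*S)*Φ from by ring]
    rw [ENNReal.ofReal_mul (by positivity : (0:ℝ) ≤ 8*Cs*(2*CA+1)*S)]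
  calc ENNReal.ofReal γ * volume {x ∈ Set.Ioo x0 (x0 + h) | γ < |T f x|}
      ≤ ENNReal.ofReal γ * (volume E1 + volume E2) := mul_le_mul_right hEsub _
    _ = 2 * (ENNReal.ofReal (γ/2) * volume E1) + 2 * (ENNReal.ofReal (γ/2) * volume E2) := by
        rw [hsplitγ]; ring
    _ ≤ 2 * (ENNReal.ofReal Cw * (ENNReal.ofReal (2*(4*CA+1)) * (ENNReal.ofReal Φ * N)))
        + 2 * (ENNReal.ofReal (4*Cs*(2*CA+1)*S*Φ) * N) :=
        add_le_add (mul_le_mul_right hwk1 _) (mul_le_mul_right hE2bd _)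
    _ = ENNReal.ofReal (4*Cw*(4*CA+1)) * ENNReal.ofReal Φ * N
        + ENNReal.ofReal (8*Cs*(2*CA+1)*S) * ENNReal.ofReal Φ * N := by
        rw [hterm1, hterm2]
    _ = ENNReal.ofReal (4*Cw*(4*CA+1) + 8*Cs*(2*CA+1)*S) * ENNReal.ofReal Φ * N := by
        rw [ENNReal.ofReal_add (by positivity) (by positivity)]
        ring
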